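/- Talagrand's compact space is not quasi weakly Radon–Nikodým. -/

import Mathlib

open Set Function

/-- A sequence of pairs of subsets `(A n, B n)` of a set `S` is *independent* if for every
`n` and every choice function `ε`, the intersection over `k < n` of `A k` (if `ε k = 0/false`)
or `B k` (if `ε k = 1/true`) is nonempty. -/
def IsIndependentSeq {S : Type*} (A B : ℕ → Set S) : Prop :=
  ∀ (n : ℕ) (ε : Fin n → Bool),
    (⋂ k : Fin n, if ε k = true then B (k : ℕ) else A (k : ℕ)).Nonempty

/-- A compact space `K` is *quasi weakly Radon–Nikodým* (QWRN) if there is a homeomorphic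
embedding `i` of `K` into `[0,1]^Γ` for some set `Γ` such that for every `ε > 0` there is a
countable decomposition `Γ = ⋃ n, Γs n` such that for every `n` and all reals `p < q` with
`q - p > ε`, the family of pairs `({x | (i x α : ℝ) < p}, {x | (i x α : ℝ) > q})`, `α ∈ Γs n`,
contains no independent sequence. -/
def IsQWRN (K : Type*) [TopologicalSpace K] : Prop :=
  ∃ (Γ : Type) (i : K → Γ → unitInterval), Topology.IsEmbedding i ∧
    ∀ ε : ℝ, ε > 0 → ∃ Γs : ℕ → Set Γ, (⋃ n, Γs n) = Set.univ ∧
      ∀ n : ℕ, ∀ p q : ℝ, q - p > ε →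
        ¬ ∃ φ : ℕ → Γ, (∀ m, φ m ∈ Γs n) ∧
          IsIndependentSeq (fun m => {x : K | (i x (φ m) : ℝ) < p})
                           (fun m => {x : K | (i x (φ m) : ℝ) > q})

/-- Talagrand's compact: the subspace of `{0,1}^(ℕ^ℕ)` consisting of the characteristic
functions of those sets `A ⊆ ℕ^ℕ` for which there is `n` such that any two distinct members
of `A` agree on the first `n` coordinates and differ in the next one. -/
def TalagrandCompact : Set ((ℕ → ℕ) → Bool) :=
  {χ | ∃ n : ℕ, ∀ x y : ℕ → ℕ, χ x = true → χ y = true → x ≠ y →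
    (∀ k < n, x k = y k) ∧ x n ≠ y n}

noncomputable def chiT (S : Set (ℕ → ℕ)) : (ℕ → ℕ) → Bool :=
  fun z => @decide (z ∈ S) (Classical.propDecidable _)

lemma chiT_eq_true {S : Set (ℕ → ℕ)} {z : ℕ → ℕ} : chiT S z = true ↔ z ∈ S := by
  simp [chiT]

lemma chiT_eq_false {S : Set (ℕ → ℕ)} {z : ℕ → ℕ} : chiT S z = false ↔ z ∉ S := by
  simp [chiT]

lemma chiT_mem_talagrand (S : Set (ℕ → ℕ)) (L : ℕ)
    (hS : ∀ u ∈ S, ∀ v ∈ S, u ≠ v → (∀ t < L, u t = v t) ∧ u L ≠ v L) :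
    chiT S ∈ TalagrandCompact :=
  ⟨L, fun x y hx hy hxy => hS x (chiT_eq_true.mp hx) y (chiT_eq_true.mp hy) hxy⟩

lemma exists_finite_support {U : Set ↥TalagrandCompact} (hU : IsOpen U)
    (χ₀ : ↥TalagrandCompact) (hmem : χ₀ ∈ U) :
    ∃ F : Finset (ℕ → ℕ), ∀ χ : ↥TalagrandCompact,
      (∀ z ∈ F, χ.1 z = χ₀.1 z) → χ ∈ U := by
  obtain ⟨V, hV, hVU⟩ := (Topology.IsInducing.subtypeVal.isOpen_iff).mp hU
  have hχV : χ₀.1 ∈ V := by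
    rw [← hVU] at hmem; exact hmem
  obtain ⟨I, u, hu, hsub⟩ := (isOpen_pi_iff.mp hV) χ₀.1 hχV
  refine ⟨I, fun χ hχ => ?_⟩
  rw [← hVU]
  apply hsub
  rw [Set.mem_pi]
  intro a ha
  rw [hχ a ha]
  exact (hu a ha).2

noncomputable def epsT (r : ℕ) : ℝ := 1 / (2 * ((r : ℝ) + 1))

lemma epsT_pos (r : ℕ) : 0 < epsT r := by
  unfold epsT; positivity

lemma two_epsT (r : ℕ) : 2 * epsT r = 1 / ((r : ℝ) + 1) := by
  have h : ((r : ℝ) + 1) ≠ 0 := by positivity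
  unfold epsT
  field_simp

lemma myGetD_append_lt {α : Type*} (L L' : List α) (d : α) (n : ℕ) (h : n < L.length) :
    (L ++ L').getD n d = L.getD n d := by
  induction L generalizing n with
  | nil => simp at h
  | cons a t ih =>
    cases n with
    | zero => rfl
    | succ n =>
      simp only [List.cons_append, List.getD_cons_succ]
      exact ih n (by simpa using h)

lemma myGetD_concat_len {α : Type*} (L : List α) (a d : α) :
    (L ++ [a]).getD L.length d = a := by
  induction L with
  | nil => rfl
  | cons b t ih =>
    simpa only [List.cons_append, List.getD_cons_succ, List.length_cons] using ih

lemma mem_foldr_union {β : Type*} [DecidableEq β] (f : (ℕ → ℕ) → Finset β)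
    (L : List (ℕ → ℕ)) {a : ℕ → ℕ} (ha : a ∈ L) {w : β} (hw : w ∈ f a) :
    w ∈ L.foldr (fun y acc => f y ∪ acc) ∅ := by
  induction L with
  | nil => cases ha
  | cons b t ih =>
    simp only [List.foldr_cons, Finset.mem_union]
    rcases List.mem_cons.mp ha with rfl | ha'
    · exact Or.inl hw
    · exact Or.inr (ih ha')

lemma exists_color {b : ℕ} (used : Finset (Fin (b + 1))) (h : used.card ≤ b) :
    ∃ v, v ∉ used := by
  by_contra hc
  push_neg at hc
  have hsub : (Finset.univ : Finset (Fin (b + 1))) ⊆ used := fun v _ => hc v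
  have := Finset.card_le_card hsub
  simp [Finset.card_univ] at this
  omega

lemma baire_dense_cylinder (P : ℕ → Set (ℕ → ℕ)) (hcov : ∀ x, ∃ k, x ∈ P k) :
    ∃ (k m : ℕ) (y : ℕ → ℕ), ∀ (l : ℕ) (z : ℕ → ℕ), m ≤ l → (∀ j < m, z j = y j) →
      ∃ x, x ∈ P k ∧ ∀ j < l, x j = z j := by
  by_contra hbad
  push_neg at hbad
  -- hbad : ∀ k m y, ∃ l z, m ≤ l ∧ (∀ j < m, z j = y j) ∧ ∀ x ∈ P k, ∃ j < l, x j ≠ z j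
  choose L Z h1 h2 h3 using hbad
  let s : ℕ → ℕ × (ℕ → ℕ) := fun k =>
    Nat.rec (motive := fun _ => ℕ × (ℕ → ℕ)) (0, fun _ => 0)
      (fun k ih => (max (L k ih.1 ih.2) (ih.1 + 1), Z k ih.1 ih.2)) k
  let m : ℕ → ℕ := fun k => (s k).1
  let y : ℕ → ℕ → ℕ := fun k => (s k).2
  have hm' : ∀ k, m (k + 1) = max (L k (m k) (y k)) (m k + 1) := fun _ => rfl
  have hy' : ∀ k, y (k + 1) = Z k (m k) (y k) := fun _ => rfl
  have hmsucc : ∀ k, m k + 1 ≤ m (k + 1) := fun k => by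
    rw [hm' k]; exact le_max_right _ _
  have hmk : ∀ k, k ≤ m k := by
    intro k
    induction k with
    | zero => exact Nat.zero_le _
    | succ k ih => have := hmsucc k; omega
  have hmono : ∀ a b, a ≤ b → m a ≤ m b := by
    intro a b hab
    induction b with
    | zero => have : a = 0 := Nat.le_zero.mp hab; subst this; exact le_rfl
    | succ b ih =>
      rcases eq_or_lt_of_le hab with h | h
      · subst h; exact le_rfl
      · have := hmsucc b; have := ih (Nat.lt_succ_iff.mp h); omega
  have hstep : ∀ k j, j < m k → y (k + 1) j = y k j := by
    intro k j hj
    rw [hy' k]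
    exact h2 k (m k) (y k) j hj
  have hcoh : ∀ a b, a ≤ b → ∀ j, j < m a → y b j = y a j := by
    intro a b hab
    induction b with
    | zero =>
      intro j hj
      have : a = 0 := Nat.le_zero.mp hab
      subst this; rfl
    | succ b ih =>
      intro j hj
      rcases eq_or_lt_of_le hab with h | h
      · subst h; rfl
      · have hab' : a ≤ b := Nat.lt_succ_iff.mp h
        rw [hstep b j (lt_of_lt_of_le hj (hmono a b hab'))]
        exact ih hab' j hj
  let x : ℕ → ℕ := fun j => y (j + 1) j
  have hx : ∀ k j, j < m k → x j = y k j := by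
    intro k j hj
    rcases le_total k (j + 1) with h | h
    · exact hcoh k (j + 1) h j hj
    · have hj' : j < m (j + 1) := lt_of_lt_of_le (Nat.lt_succ_self j) (hmk (j + 1))
      exact (hcoh (j + 1) k h j hj').symm
  obtain ⟨k, hk⟩ := hcov x
  obtain ⟨j, hj, hne⟩ := h3 k (m k) (y k) x hk
  apply hne
  have hjm : j < m (k + 1) := lt_of_lt_of_le hj (by rw [hm' k]; exact le_max_left _ _)
  rw [hx (k + 1) j hjm, hy' k]

/-- Talagrand's compact space is not QWRN. -/
theorem talagrandCompact_not_isQWRN : ¬ IsQWRN TalagrandCompact := by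
  rintro ⟨Γ, i, hemb, h⟩
  classical
  have H : ∀ r : ℕ, ∃ Γs : ℕ → Set Γ, (⋃ n, Γs n) = Set.univ ∧
      ∀ n : ℕ, ∀ p q : ℝ, q - p > epsT r →
        ¬ ∃ φ : ℕ → Γ, (∀ m, φ m ∈ Γs n) ∧
          IsIndependentSeq (fun m => {x : ↥TalagrandCompact | (i x (φ m) : ℝ) < p})
                           (fun m => {x : ↥TalagrandCompact | (i x (φ m) : ℝ) > q}) :=
    fun r => h (epsT r) (epsT_pos r)
  choose Γs hΓscov hNI using H
  -- the empty-set point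
  let χE : ↥TalagrandCompact :=
    ⟨chiT ∅, chiT_mem_talagrand ∅ 0 (fun u hu => absurd hu (Set.notMem_empty u))⟩
  have hAll : ∀ x : ℕ → ℕ, ∃ (r n : ℕ) (p q : ℚ) (o : Bool) (b : ℕ) (α : Γ)
      (Z W : Finset (ℕ → ℕ)), α ∈ Γs r n ∧ x ∉ Z ∧ Z.card + W.card ≤ b ∧
      (q : ℝ) - (p : ℝ) > epsT r ∧
      (∀ χ : ↥TalagrandCompact, χ.1 x = true → (∀ z ∈ Z, χ.1 z = false) →
        (if o then (q : ℝ) < (i χ α : ℝ) else (i χ α : ℝ) < (p : ℝ))) ∧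
      (∀ χ : ↥TalagrandCompact, (∀ z ∈ W, χ.1 z = false) →
        (if o then (i χ α : ℝ) < (p : ℝ) else (q : ℝ) < (i χ α : ℝ))) := by
    intro x
    have hxsing : chiT {x} ∈ TalagrandCompact := by
      apply chiT_mem_talagrand {x} 0
      intro u hu v hv huv
      simp only [Set.mem_singleton_iff] at hu hv
      subst hu; subst hv
      exact absurd rfl huv
    set χx : ↥TalagrandCompact := ⟨chiT {x}, hxsing⟩ with hχx
    have hne : χx ≠ χE := by
      intro hcontra
      have h0 := congrFun (congrArg Subtype.val hcontra) x
      have h1 : chiT {x} x = true := chiT_eq_true.mpr rfl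
      have h2 : chiT (∅ : Set (ℕ → ℕ)) x = false := chiT_eq_false.mpr (Set.notMem_empty x)
      simp only [hχx] at h0
      rw [h1, show (χE : (ℕ → ℕ) → Bool) x = chiT ∅ x from rfl, h2] at h0
      simp at h0
    have hine : i χx ≠ i χE := fun hh => hne (hemb.injective hh)
    obtain ⟨α₀, hα₀⟩ := Function.ne_iff.mp hine
    have hvne : (i χx α₀ : ℝ) ≠ (i χE α₀ : ℝ) := fun hh => hα₀ (Subtype.ext hh)
    obtain ⟨r, hr⟩ := exists_nat_one_div_lt (abs_pos.mpr (sub_ne_zero.mpr hvne))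
    have hgap2 : 2 * epsT r < |(i χx α₀ : ℝ) - (i χE α₀ : ℝ)| := by
      rw [two_epsT]; exact hr
    have hα₀U : α₀ ∈ ⋃ n, Γs r n := by rw [hΓscov r]; trivial
    obtain ⟨n, hn⟩ := Set.mem_iUnion.mp hα₀U
    set u : ℝ := (i χE α₀ : ℝ) with hu
    set v : ℝ := (i χx α₀ : ℝ) with hv
    have hcont : Continuous (fun χ : ↥TalagrandCompact => (i χ α₀ : ℝ)) :=
      continuous_subtype_val.comp ((continuous_apply α₀).comp hemb.continuous)
    have heps := epsT_pos r
    rcases lt_or_gt_of_ne hvne with hvu | huv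
    · -- v < u : orientation false
      have hd : 2 * epsT r < u - v := by
        rw [abs_of_neg (by linarith)] at hgap2; linarith
      obtain ⟨p', hp1, hp2⟩ := exists_rat_btwn (show v < (u + v) / 2 - epsT r / 2 by linarith)
      obtain ⟨q', hq1, hq2⟩ := exists_rat_btwn (show (u + v) / 2 + epsT r / 2 < u by linarith)
      have hUx : IsOpen {χ : ↥TalagrandCompact | (i χ α₀ : ℝ) < (p' : ℝ)} :=
        isOpen_lt hcont continuous_const
      obtain ⟨F, hF⟩ := exists_finite_support hUx χx hp1
      have hUe : IsOpen {χ : ↥TalagrandCompact | (q' : ℝ) < (i χ α₀ : ℝ)} :=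
        isOpen_lt continuous_const hcont
      obtain ⟨F', hF'⟩ := exists_finite_support hUe χE hq2
      refine ⟨r, n, p', q', false, (F.erase x).card + F'.card, α₀, F.erase x, F', hn,
        Finset.notMem_erase x F, le_rfl, by linarith, ?_, ?_⟩
      · intro χ hχx1 hχZ
        simp only [Bool.false_eq_true, if_false]
        apply hF
        intro z hz
        by_cases hzx : z = x
        · subst hzx
          rw [hχx1]
          exact (chiT_eq_true.mpr rfl).symm
        · rw [hχZ z (Finset.mem_erase.mpr ⟨hzx, hz⟩)]
          exact (chiT_eq_false.mpr (by simp [hzx])).symm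
      · intro χ hχW
        simp only [Bool.false_eq_true, if_false]
        apply hF'
        intro z hz
        rw [hχW z hz]
        exact (chiT_eq_false.mpr (Set.notMem_empty z)).symm
    · -- u < v : orientation true
      have hd : 2 * epsT r < v - u := by
        rw [abs_of_pos (by linarith)] at hgap2; linarith
      obtain ⟨p', hp1, hp2⟩ := exists_rat_btwn (show u < (u + v) / 2 - epsT r / 2 by linarith)
      obtain ⟨q', hq1, hq2⟩ := exists_rat_btwn (show (u + v) / 2 + epsT r / 2 < v by linarith)
      have hUx : IsOpen {χ : ↥TalagrandCompact | (q' : ℝ) < (i χ α₀ : ℝ)} :=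
        isOpen_lt continuous_const hcont
      obtain ⟨F, hF⟩ := exists_finite_support hUx χx hq2
      have hUe : IsOpen {χ : ↥TalagrandCompact | (i χ α₀ : ℝ) < (p' : ℝ)} :=
        isOpen_lt hcont continuous_const
      obtain ⟨F', hF'⟩ := exists_finite_support hUe χE hp1
      refine ⟨r, n, p', q', true, (F.erase x).card + F'.card, α₀, F.erase x, F', hn,
        Finset.notMem_erase x F, le_rfl, by linarith, ?_, ?_⟩
      · intro χ hχx1 hχZ
        simp only [if_true]
        apply hF
        intro z hz
        by_cases hzx : z = x
        · subst hzx
          rw [hχx1]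
          exact (chiT_eq_true.mpr rfl).symm
        · rw [hχZ z (Finset.mem_erase.mpr ⟨hzx, hz⟩)]
          exact (chiT_eq_false.mpr (by simp [hzx])).symm
      · intro χ hχW
        simp only [if_true]
        apply hF'
        intro z hz
        rw [hχW z hz]
        exact (chiT_eq_false.mpr (Set.notMem_empty z)).symm
  choose rD nD pD qD oD bD αD ZD WD hαmem hxZ hcardZW hgapD hHi hLo using hAll
  -- countable data; Baire category on ℕ^ℕ
  let tup : (ℕ → ℕ) → ℕ × ℕ × ℚ × ℚ × Bool × ℕ := fun x => (rD x, nD x, pD x, qD x, oD x, bD x)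
  obtain ⟨K0, M0, Y0, hdense⟩ := baire_dense_cylinder
    (fun k => {x | Encodable.encode (tup x) = k}) (fun x => ⟨_, rfl⟩)
  obtain ⟨x₀, hx₀, -⟩ := hdense M0 Y0 le_rfl (fun _ _ => rfl)
  have hcomp : ∀ x : ℕ → ℕ, Encodable.encode (tup x) = K0 →
      rD x = rD x₀ ∧ nD x = nD x₀ ∧ pD x = pD x₀ ∧ qD x = qD x₀ ∧
      oD x = oD x₀ ∧ bD x = bD x₀ := by
    intro x hx
    have htup : tup x = tup x₀ := Encodable.encode_injective (by rw [hx]; exact hx₀.symm ▸ rfl)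
    simpa only [tup, Prod.mk.injEq] using htup
  -- density with avoidance of finite sets of points
  have hdense' : ∀ (j : ℕ) (B : Finset (ℕ → ℕ)), ∃ x : ℕ → ℕ,
      Encodable.encode (tup x) = K0 ∧ (∀ t < M0, x t = Y0 t) ∧ x M0 = j ∧
      ∀ w ∈ B, x ≠ w := by
    intro j B
    obtain ⟨x, hxP, hxag⟩ := hdense (M0 + 2)
      (fun t => if t < M0 then Y0 t else if t = M0 then j else (B.sup fun w => w (M0 + 1)) + 1)
      (by omega) (fun t ht => by simp [ht])
    refine ⟨x, hxP, ?_, ?_, ?_⟩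
    · intro t ht
      have := hxag t (by omega)
      simpa [ht] using this
    · have := hxag M0 (by omega)
      simpa using this
    · intro w hw hxw
      have h1 := hxag (M0 + 1) (by omega)
      have hn1 : ¬ (M0 + 1 < M0) := by clear hxag h1; omega
      have hn2 : M0 + 1 ≠ M0 := by clear hxag h1 hn1; omega
      rw [if_neg hn1, if_neg hn2] at h1
      have h2 : w (M0 + 1) ≤ B.sup fun w => w (M0 + 1) :=
        Finset.le_sup (f := fun w => w (M0 + 1)) hw
      rw [← hxw, h1] at h2
      exact Nat.not_succ_le_self _ h2
  -- fan construction
  have hpick : ∀ (k : ℕ) (L : List (ℕ → ℕ)), ∃ x : ℕ → ℕ,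
      Encodable.encode (tup x) = K0 ∧ (∀ t < M0, x t = Y0 t) ∧ x M0 = k ∧
      ∀ y ∈ L, x ∉ ZD y ∪ WD y := by
    intro k L
    obtain ⟨x, h1, h2, h3, h4⟩ := hdense' k (L.foldr (fun y acc => (ZD y ∪ WD y) ∪ acc) ∅)
    exact ⟨x, h1, h2, h3, fun y hy hxin =>
      h4 x (mem_foldr_union (fun y => ZD y ∪ WD y) L hy hxin) rfl⟩
  choose pickF hpk1 hpk2 hpk3 hpk4 using hpick
  let fl : ℕ → List (ℕ → ℕ) := fun k =>
    Nat.rec (motive := fun _ => List (ℕ → ℕ)) [] (fun k ih => ih ++ [pickF k ih]) k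
  let X : ℕ → ℕ → ℕ := fun k => pickF k (fl k)
  have hflS : ∀ k, fl (k + 1) = fl k ++ [X k] := fun _ => rfl
  have hmemfl : ∀ l k, l < k → X l ∈ fl k := by
    intro l k hlk
    induction k with
    | zero => omega
    | succ k ih =>
      rw [hflS k]
      rcases Nat.lt_succ_iff_lt_or_eq.mp hlk with h | h
      · exact List.mem_append_left _ (ih h)
      · subst h; exact List.mem_append_right _ (List.mem_singleton.mpr rfl)
  have hXP : ∀ k, Encodable.encode (tup (X k)) = K0 := fun k => hpk1 k (fl k)
  have hXpre : ∀ k t, t < M0 → X k t = Y0 t := fun k => hpk2 k (fl k)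
  have hXm : ∀ k, X k M0 = k := fun k => hpk3 k (fl k)
  have hXbad : ∀ l k, l < k → X k ∉ ZD (X l) ∪ WD (X l) :=
    fun l k hl => hpk4 k (fl k) (X l) (hmemfl l k hl)
  have hXinj : Function.Injective X := fun a b hab => by
    rw [← hXm a, ← hXm b, hab]
  -- coloring
  let b0 := bD x₀
  let badIdx : ℕ → Finset ℕ := fun k =>
    (Finset.range k).filter (fun l => X l ∈ ZD (X k) ∪ WD (X k))
  have hbadcard : ∀ k, (badIdx k).card ≤ b0 := by
    intro k
    have h1 : (badIdx k).card ≤ (ZD (X k) ∪ WD (X k)).card :=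
      Finset.card_le_card_of_injOn X (fun l hl => (Finset.mem_filter.mp hl).2)
        (fun a _ b _ hab => hXinj hab)
    have h2 := Finset.card_union_le (ZD (X k)) (WD (X k))
    have h3 := hcardZW (X k)
    have h4 := (hcomp (X k) (hXP k)).2.2.2.2.2
    simp only [b0]
    omega
  have hcol : ∀ (k : ℕ) (L : List (Fin (b0 + 1))), ∃ v : Fin (b0 + 1),
      ∀ l ∈ badIdx k, L.getD l 0 ≠ v := by
    intro k L
    obtain ⟨v, hv⟩ := exists_color ((badIdx k).image (fun l => L.getD l 0))
      (le_trans Finset.card_image_le (hbadcard k))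
    exact ⟨v, fun l hl hEq => hv (Finset.mem_image.mpr ⟨l, hl, hEq⟩)⟩
  choose pickC hpickC using hcol
  let cl : ℕ → List (Fin (b0 + 1)) := fun k =>
    Nat.rec (motive := fun _ => List (Fin (b0 + 1))) [] (fun k ih => ih ++ [pickC k ih]) k
  let c : ℕ → Fin (b0 + 1) := fun k => pickC k (cl k)
  have hclS : ∀ k, cl (k + 1) = cl k ++ [c k] := fun _ => rfl
  have hcllen : ∀ k, (cl k).length = k := by
    intro k
    induction k with
    | zero => rfl
    | succ k ih => rw [hclS k, List.length_append, ih]; rfl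
  have hclget : ∀ k l, l < k → (cl k).getD l 0 = c l := by
    intro k l hlk
    induction k with
    | zero => omega
    | succ k ih =>
      rw [hclS k]
      rcases Nat.lt_succ_iff_lt_or_eq.mp hlk with h | h
      · rw [myGetD_append_lt _ _ _ _ (by rw [hcllen]; exact h)]
        exact ih h
      · subst h
        have := myGetD_concat_len (cl l) (c l) 0
        rwa [hcllen l] at this
  have hcne : ∀ k l, l ∈ badIdx k → c l ≠ c k := by
    intro k l hl
    have hlk : l < k := Finset.mem_range.mp (Finset.mem_filter.mp hl).1
    have := hpickC k (cl k) l hl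
    rwa [hclget k l hlk] at this
  -- infinite fiber
  have hfib : ∃ v : Fin (b0 + 1), {k | c k = v}.Infinite := by
    by_contra hc
    push_neg at hc
    have hsub : (Set.univ : Set ℕ) ⊆ ⋃ v : Fin (b0 + 1), {k | c k = v} :=
      fun k _ => Set.mem_iUnion.mpr ⟨c k, rfl⟩
    exact Set.infinite_univ (Set.Finite.subset (Set.finite_iUnion hc) hsub)
  obtain ⟨v0, hv0⟩ := hfib
  let e : ℕ ↪ ↥{k | c k = v0} := hv0.natEmbedding
  let Y : ℕ → ℕ → ℕ := fun a => X (e a).1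
  have hYne : ∀ a b : ℕ, a ≠ b → (e a).1 ≠ (e b).1 :=
    fun a b hab hh => hab (e.injective (Subtype.ext hh))
  have hYnc : ∀ a b : ℕ, a ≠ b → Y a ∉ ZD (Y b) ∪ WD (Y b) := by
    intro a b hab
    rcases lt_or_gt_of_ne (hYne a b hab) with hlt | hgt
    · intro hmem
      have hidx : (e a).1 ∈ badIdx (e b).1 :=
        Finset.mem_filter.mpr ⟨Finset.mem_range.mpr hlt, hmem⟩
      exact hcne (e b).1 (e a).1 hidx (by rw [(e a).2, (e b).2])
    · exact hXbad (e b).1 (e a).1 hgt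
  -- final contradiction
  apply hNI (rD x₀) (nD x₀) ((pD x₀ : ℝ)) ((qD x₀ : ℝ)) (hgapD x₀)
  refine ⟨fun a => αD (Y a), ?_, ?_⟩
  · intro a
    have hc := hcomp (Y a) (hXP (e a).1)
    have hm := hαmem (Y a)
    rwa [hc.1, hc.2.1] at hm
  · intro N τ
    set SS : Set (ℕ → ℕ) := {z | ∃ jj : Fin N, τ jj = oD x₀ ∧ z = Y jj} with hSS
    have hSmem : chiT SS ∈ TalagrandCompact := by
      apply chiT_mem_talagrand SS M0
      rintro u ⟨ju, hju, rfl⟩ v ⟨jv, hjv, rfl⟩ huv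
      have hjne : ((ju : ℕ) : ℕ) ≠ ((jv : ℕ) : ℕ) := by
        intro hh
        exact huv (by rw [hh])
      constructor
      · intro t ht
        show X (e ju).1 t = X (e jv).1 t
        rw [hXpre _ t ht, hXpre _ t ht]
      · show X (e ju).1 M0 ≠ X (e jv).1 M0
        rw [hXm, hXm]
        exact hYne _ _ hjne
    refine ⟨⟨chiT SS, hSmem⟩, ?_⟩
    rw [Set.mem_iInter]
    intro k
    obtain ⟨hr, hn, hp, hq, ho, hb⟩ := hcomp (Y k) (hXP (e (k : ℕ)).1)
    have hZcl : ∀ z ∈ ZD (Y k), chiT SS z = false := by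
      intro z hz
      rw [chiT_eq_false]
      rintro ⟨jj, hjj, rfl⟩
      by_cases hjk : ((jj : ℕ) : ℕ) = ((k : ℕ) : ℕ)
      · have hYY : Y (jj : ℕ) = Y (k : ℕ) := by rw [hjk]
        rw [hYY] at hz
        exact hxZ (Y k) hz
      · exact hYnc (jj : ℕ) (k : ℕ) hjk (Finset.mem_union_left _ hz)
    have hWcl : τ k ≠ oD x₀ → ∀ z ∈ WD (Y k), chiT SS z = false := by
      intro hτk z hz
      rw [chiT_eq_false]
      rintro ⟨jj, hjj, rfl⟩
      by_cases hjk : ((jj : ℕ) : ℕ) = ((k : ℕ) : ℕ)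
      · exact hτk (by rw [← Fin.val_injective hjk]; exact hjj)
      · exact hYnc (jj : ℕ) (k : ℕ) hjk (Finset.mem_union_right _ hz)
    by_cases hτ : τ k = true
    · rw [if_pos hτ]
      show ((qD x₀ : ℝ)) < (i ⟨chiT SS, hSmem⟩ (αD (Y (k : ℕ))) : ℝ)
      by_cases ho0 : oD x₀ = true
      · have hmem1 : chiT SS (Y k) = true :=
          chiT_eq_true.mpr ⟨k, by rw [hτ, ho0], rfl⟩
        have hres := hHi (Y k) ⟨chiT SS, hSmem⟩ hmem1 hZcl
        rw [ho, ho0, if_pos rfl] at hres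
        rwa [hq] at hres
      · have hτk : τ k ≠ oD x₀ := by
          rw [hτ]; exact fun hh => ho0 hh.symm
        have hres := hLo (Y k) ⟨chiT SS, hSmem⟩ (hWcl hτk)
        have ho0f : oD x₀ = false := Bool.eq_false_iff.mpr ho0
        rw [ho, ho0f] at hres
        simp only [Bool.false_eq_true, if_false] at hres
        rwa [hq] at hres
    · rw [if_neg hτ]
      show (i ⟨chiT SS, hSmem⟩ (αD (Y (k : ℕ))) : ℝ) < ((pD x₀ : ℝ))
      have hτf : τ k = false := Bool.eq_false_iff.mpr hτ
      by_cases ho0 : oD x₀ = true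
      · have hτk : τ k ≠ oD x₀ := by rw [ho0]; exact hτ
        have hres := hLo (Y k) ⟨chiT SS, hSmem⟩ (hWcl hτk)
        rw [ho, ho0, if_pos rfl] at hres
        rwa [hp] at hres
      · have ho0f : oD x₀ = false := Bool.eq_false_iff.mpr ho0
        have hmem1 : chiT SS (Y k) = true :=
          chiT_eq_true.mpr ⟨k, by rw [hτf, ho0f], rfl⟩
        have hres := hHi (Y k) ⟨chiT SS, hSmem⟩ hmem1 hZcl
        rw [ho, ho0f] at hres
        simp only [Bool.false_eq_true, if_false] at hres
        rwa [hp] at hres
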